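/- Let Γ be the random bipartite graph. Then Aut(Γ)* = S_{l}(Γ) ∩ S_{r}(Γ); moreover any switch ρ with respect to the whole side R_l belongs to both S_{l}(Γ) and S_{r}(Γ). -/

import Mathlib

/-! Preamble: bipartite graphs, the random bipartite graph, side-preserving
permutation groups, switches, switch groups, and related notions. -/

/-- A bipartite graph on a vertex type `V`: the sides `left` and `right`
partition `V`, both sides are nonempty, and `adj` (the relation `P₁`) only holds
from `left` to `right`.  The relation `P₂` is the complement of `adj` on
`left × right`. -/
structure BipartiteGraph (V : Type*) where
  left : Set V
  right : Set V
  adj : V → V → Prop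
  left_nonempty : left.Nonempty
  right_nonempty : right.Nonempty
  union_eq : left ∪ right = Set.univ
  disjoint_sides : Disjoint left right
  adj_dom : ∀ a b, adj a b → a ∈ left ∧ b ∈ right

/-- The two sides of a bipartite graph. -/
inductive BSide : Type
  | l : BSide
  | r : BSide
deriving DecidableEq

namespace BipartiteGraph

variable {V : Type*} (Γ : BipartiteGraph V)

/-- The side of the graph indexed by an element of `BSide`. -/
def side : BSide → Set V
  | BSide.l => Γ.left
  | BSide.r => Γ.right

/-- `Γ` is (isomorphic to) the random bipartite graph: it is countable, both
sides are infinite, and it satisfies the extension properties `Θₙ` for all `n`. -/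
structure IsRandom : Prop where
  countable : Countable V
  left_infinite : Γ.left.Infinite
  right_infinite : Γ.right.Infinite
  ext_left : ∀ X₁ X₂ : Finset V, ↑X₁ ⊆ Γ.left → ↑X₂ ⊆ Γ.left → Disjoint X₁ X₂ →
      ∃ v ∈ Γ.right, (∀ x ∈ X₁, Γ.adj x v) ∧ (∀ x ∈ X₂, ¬ Γ.adj x v)
  ext_right : ∀ X₁ X₂ : Finset V, ↑X₁ ⊆ Γ.right → ↑X₂ ⊆ Γ.right → Disjoint X₁ X₂ →
      ∃ v ∈ Γ.left, (∀ x ∈ X₁, Γ.adj v x) ∧ (∀ x ∈ X₂, ¬ Γ.adj v x)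

/-- `Sym_{l,r}(Γ)`: the group of permutations of `V` preserving both sides. -/
def symLR : Subgroup (Equiv.Perm V) where
  carrier := {g | (∀ v, g v ∈ Γ.left ↔ v ∈ Γ.left) ∧ (∀ v, g v ∈ Γ.right ↔ v ∈ Γ.right)}
  one_mem' := ⟨fun _ => Iff.rfl, fun _ => Iff.rfl⟩
  mul_mem' := by
    rintro a b ⟨hal, har⟩ ⟨hbl, hbr⟩
    exact ⟨fun v => (hal (b v)).trans (hbl v), fun v => (har (b v)).trans (hbr v)⟩
  inv_mem' := by
    rintro a ⟨hal, har⟩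
    refine ⟨fun v => ?_, fun v => ?_⟩
    · have h := hal (a⁻¹ v); rw [Equiv.Perm.coe_inv, Equiv.apply_symm_apply] at h; exact h.symm
    · have h := har (a⁻¹ v); rw [Equiv.Perm.coe_inv, Equiv.apply_symm_apply] at h; exact h.symm

/-- The automorphism group of `Γ`: side-preserving permutations preserving `adj`
(and hence both cross-types). -/
def autGroup : Subgroup (Equiv.Perm V) where
  carrier := {g | g ∈ Γ.symLR ∧ ∀ a b, Γ.adj a b ↔ Γ.adj (g a) (g b)}
  one_mem' := ⟨Γ.symLR.one_mem, fun _ _ => Iff.rfl⟩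
  mul_mem' := by
    rintro a b ⟨ha, ha2⟩ ⟨hb, hb2⟩
    exact ⟨mul_mem ha hb, fun x y => (hb2 x y).trans (ha2 (b x) (b y))⟩
  inv_mem' := by
    rintro a ⟨ha, ha2⟩
    refine ⟨inv_mem ha, fun x y => ?_⟩
    have h := ha2 (a⁻¹ x) (a⁻¹ y)
    rw [Equiv.Perm.coe_inv, Equiv.apply_symm_apply, Equiv.apply_symm_apply] at h
    exact h.symm

/-- A permutation `g` is a switch with respect to a set `A` if it preserves the
sides and, for every cross-edge `(a, b)`, the cross-type of `(a, b)` is preserved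
if and only if `|{a, b} ∩ A| ≠ 1`. -/
def IsSwitch (g : Equiv.Perm V) (A : Set V) : Prop :=
  g ∈ Γ.symLR ∧ ∀ a ∈ Γ.left, ∀ b ∈ Γ.right,
    ((Γ.adj a b ↔ Γ.adj (g a) (g b)) ↔ ({a, b} ∩ A : Set V).ncard ≠ 1)

/-- The restriction of a map `g` to a set `S` is a switch with respect to `A`:
the condition of `IsSwitch` holds for all cross-edges inside `S`. -/
def IsSwitchOn (g : V → V) (S : Set V) (A : Set V) : Prop :=
  ∀ a ∈ S ∩ Γ.left, ∀ b ∈ S ∩ Γ.right,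
    ((Γ.adj a b ↔ Γ.adj (g a) (g b)) ↔ ({a, b} ∩ A : Set V).ncard ≠ 1)

/-- The restriction of a map `g` to a set `S` is an isomorphism: `g` preserves
the cross-type of every cross-edge inside `S`. -/
def IsIsoOn (g : V → V) (S : Set V) : Prop :=
  ∀ a ∈ S ∩ Γ.left, ∀ b ∈ S ∩ Γ.right, (Γ.adj a b ↔ Γ.adj (g a) (g b))

end BipartiteGraph

/-- A subgroup of the full symmetric group is closed (in the topology of
pointwise convergence) iff it contains every permutation which agrees with some
member of the subgroup on each finite subset. -/
def IsClosedSubgroup {V : Type*} (G : Subgroup (Equiv.Perm V)) : Prop :=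
  ∀ g : Equiv.Perm V, (∀ F : Finset V, ∃ h ∈ G, ∀ x ∈ F, h x = g x) → g ∈ G

/-- The closed subgroup generated by a set of permutations: the intersection of
all closed subgroups containing the set. -/
def closedClosure {V : Type*} (S : Set (Equiv.Perm V)) : Subgroup (Equiv.Perm V) :=
  sInf {G : Subgroup (Equiv.Perm V) | IsClosedSubgroup G ∧ S ⊆ ↑G}

namespace BipartiteGraph

variable {V : Type*} (Γ : BipartiteGraph V)

/-- The switch group `S_X(Γ)`: the closed subgroup of `Sym_{l,r}(Γ)` generated
by `Aut(Γ)` together with all switches with respect to a single vertex `v ∈ R_i`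
for `i ∈ X`. -/
def switchGroup (X : Set BSide) : Subgroup (Equiv.Perm V) :=
  closedClosure ((Γ.autGroup : Set (Equiv.Perm V)) ∪
    {g | ∃ i ∈ X, ∃ v ∈ Γ.side i, Γ.IsSwitch g {v}})

/-- The group `S_X(Γ)* `: the closed subgroup generated by `S_X(Γ)` together with
a switch `ρ` with respect to the whole side `R_l`. -/
def switchGroupStar (X : Set BSide) : Subgroup (Equiv.Perm V) :=
  closedClosure ((Γ.switchGroup X : Set (Equiv.Perm V)) ∪ {g | Γ.IsSwitch g Γ.left})

/-- Membership in `Aut(Γ)*`, the group of side-preserving permutations which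
either preserve all cross-types on `R_l × R_r` or exchange all cross-types on
`R_l × R_r`. -/
def InAutStar (g : Equiv.Perm V) : Prop :=
  g ∈ Γ.symLR ∧
    ((∀ a ∈ Γ.left, ∀ b ∈ Γ.right, (Γ.adj a b ↔ Γ.adj (g a) (g b))) ∨
     (∀ a ∈ Γ.left, ∀ b ∈ Γ.right, (Γ.adj a b ↔ ¬ Γ.adj (g a) (g b))))

/-- The number of cross-edges of cross-type `P₁` inside the set `S`. -/
noncomputable def edgeCount (S : Set V) : ℕ :=
  {p : V × V | p.1 ∈ S ∧ p.2 ∈ S ∧ Γ.adj p.1 p.2}.ncard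

/-- `g` preserves the parity of cross-types on `S`: the number of `P₁`
cross-edges in `S` is even iff the number of `P₁` cross-edges in `g[S]` is even. -/
def PreservesParityOn (g : V → V) (S : Set V) : Prop :=
  Even (Γ.edgeCount S) ↔ Even (Γ.edgeCount (g '' S))

/-- An `(m × n)`-subgraph of `Γ`: a finite set of vertices with `m` vertices on
the left side and `n` vertices on the right side. -/
def IsMNSubgraph (S : Set V) (m n : ℕ) : Prop :=
  S.Finite ∧ (S ∩ Γ.left).ncard = m ∧ (S ∩ Γ.right).ncard = n

end BipartiteGraph


/-! ### Auxiliary development -/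

namespace BipartiteGraph

variable {V : Type*} (Γ : BipartiteGraph V)

lemma not_right_of_left {a : V} (ha : a ∈ Γ.left) : a ∉ Γ.right :=
  fun h => Set.disjoint_left.mp Γ.disjoint_sides ha h

lemma not_left_of_right {a : V} (ha : a ∈ Γ.right) : a ∉ Γ.left :=
  fun h => Set.disjoint_left.mp Γ.disjoint_sides h ha

lemma mem_left_or_right (a : V) : a ∈ Γ.left ∨ a ∈ Γ.right := by
  have : a ∈ Γ.left ∪ Γ.right := Γ.union_eq.symm ▸ Set.mem_univ a
  exact this

lemma adj_irrefl (a : V) : ¬ Γ.adj a a := fun h =>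
  Γ.not_right_of_left (Γ.adj_dom a a h).1 (Γ.adj_dom a a h).2

lemma mem_symLR_iff {g : Equiv.Perm V} :
    g ∈ Γ.symLR ↔ (∀ v, g v ∈ Γ.left ↔ v ∈ Γ.left) ∧ (∀ v, g v ∈ Γ.right ↔ v ∈ Γ.right) :=
  Iff.rfl

lemma pair_ncard_eq_one_iff {a b : V} {C : Set V} (h : ¬(a ∈ C ∧ b ∈ C)) :
    (({a, b} : Set V) ∩ C).ncard = 1 ↔ (a ∈ C ∨ b ∈ C) := by
  by_cases ha : a ∈ C <;> by_cases hb : b ∈ C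
  · exact absurd ⟨ha, hb⟩ h
  · have : ({a, b} : Set V) ∩ C = {a} := by
      ext x
      simp only [Set.mem_inter_iff, Set.mem_insert_iff, Set.mem_singleton_iff]
      constructor
      · rintro ⟨hx | hx, hxC⟩
        · exact hx
        · exact absurd (hx ▸ hxC) hb
      · rintro rfl; exact ⟨Or.inl rfl, ha⟩
    rw [this, Set.ncard_singleton]
    simp [ha]
  · have : ({a, b} : Set V) ∩ C = {b} := by
      ext x
      simp only [Set.mem_inter_iff, Set.mem_insert_iff, Set.mem_singleton_iff]
      constructor
      · rintro ⟨hx | hx, hxC⟩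
        · exact absurd (hx ▸ hxC) ha
        · exact hx
      · rintro rfl; exact ⟨Or.inr rfl, hb⟩
    rw [this, Set.ncard_singleton]
    simp [hb]
  · have : ({a, b} : Set V) ∩ C = ∅ := by
      ext x
      simp only [Set.mem_inter_iff, Set.mem_insert_iff, Set.mem_singleton_iff,
        Set.mem_empty_iff_false, iff_false, not_and]
      rintro (rfl | rfl) <;> assumption
    rw [this]
    simp [ha, hb]

/-- no cross pair can have both entries in a subset of a single side -/
lemma not_both_mem_side {a b : V} {i : BSide} {C : Set V} (hC : C ⊆ Γ.side i)
    (ha : a ∈ Γ.left) (hb : b ∈ Γ.right) : ¬(a ∈ C ∧ b ∈ C) := by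
  rintro ⟨haC, hbC⟩
  cases i with
  | l => exact Γ.not_right_of_left (hC hbC) hb
  | r => exact Γ.not_left_of_right (hC haC) ha

/-- Extension property on the right side of the graph, avoiding a finite set. -/
lemma ext_right_avoid (hΓ : Γ.IsRandom) (B : Finset V) :
    ∀ X₁ X₂ : Finset V, ↑X₁ ⊆ Γ.right → ↑X₂ ⊆ Γ.right → Disjoint X₁ X₂ →
      ∃ v ∈ Γ.left, v ∉ B ∧ (∀ x ∈ X₁, Γ.adj v x) ∧ (∀ x ∈ X₂, ¬ Γ.adj v x) := by
  classical
  induction B using Finset.induction with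
  | empty =>
    intro X₁ X₂ h₁ h₂ hd
    obtain ⟨v, hv, hp⟩ := hΓ.ext_right X₁ X₂ h₁ h₂ hd
    exact ⟨v, hv, by simp, hp⟩
  | @insert a B haB IH =>
    intro X₁ X₂ h₁ h₂ hd
    obtain ⟨v, hv, hvB, hp₁, hp₂⟩ := IH X₁ X₂ h₁ h₂ hd
    by_cases hva : v = a
    · -- need a witness different from a
      obtain ⟨b, hbr, hbX⟩ := hΓ.right_infinite.exists_notMem_finset (X₁ ∪ X₂)
      by_cases hab : Γ.adj a b
      · obtain ⟨w, hw, hwB, hq₁, hq₂⟩ := IH X₁ (insert b X₂) h₁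
          (by rw [Finset.coe_insert]; exact Set.insert_subset hbr h₂)
          (by rw [Finset.disjoint_right]
              intro x hx
              rcases Finset.mem_insert.mp hx with rfl | hx
              · exact fun hmem => hbX (Finset.mem_union_left _ hmem)
              · exact fun hmem => (Finset.disjoint_left.mp hd hmem) hx)
        refine ⟨w, hw, ?_, hq₁, fun x hx => hq₂ x (Finset.mem_insert_of_mem hx)⟩
        intro hmem
        rcases Finset.mem_insert.mp hmem with rfl | hmem
        · exact hq₂ b (Finset.mem_insert_self _ _) hab
        · exact hwB hmem
      · obtain ⟨w, hw, hwB, hq₁, hq₂⟩ := IH (insert b X₁) X₂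
          (by rw [Finset.coe_insert]; exact Set.insert_subset hbr h₁) h₂
          (by rw [Finset.disjoint_left]
              intro x hx
              rcases Finset.mem_insert.mp hx with rfl | hx
              · exact fun hmem => hbX (Finset.mem_union_right _ hmem)
              · exact fun hmem => (Finset.disjoint_left.mp hd hx) hmem)
        refine ⟨w, hw, ?_, fun x hx => hq₁ x (Finset.mem_insert_of_mem hx), hq₂⟩
        intro hmem
        rcases Finset.mem_insert.mp hmem with rfl | hmem
        · exact hab (hq₁ b (Finset.mem_insert_self _ _))
        · exact hwB hmem
    · exact ⟨v, hv, by simp [hva, hvB], hp₁, hp₂⟩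

/-- Extension property on the left side of the graph, avoiding a finite set. -/
lemma ext_left_avoid (hΓ : Γ.IsRandom) (B : Finset V) :
    ∀ X₁ X₂ : Finset V, ↑X₁ ⊆ Γ.left → ↑X₂ ⊆ Γ.left → Disjoint X₁ X₂ →
      ∃ v ∈ Γ.right, v ∉ B ∧ (∀ x ∈ X₁, Γ.adj x v) ∧ (∀ x ∈ X₂, ¬ Γ.adj x v) := by
  classical
  induction B using Finset.induction with
  | empty =>
    intro X₁ X₂ h₁ h₂ hd
    obtain ⟨v, hv, hp⟩ := hΓ.ext_left X₁ X₂ h₁ h₂ hd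
    exact ⟨v, hv, by simp, hp⟩
  | @insert a B haB IH =>
    intro X₁ X₂ h₁ h₂ hd
    obtain ⟨v, hv, hvB, hp₁, hp₂⟩ := IH X₁ X₂ h₁ h₂ hd
    by_cases hva : v = a
    · obtain ⟨b, hbl, hbX⟩ := hΓ.left_infinite.exists_notMem_finset (X₁ ∪ X₂)
      by_cases hab : Γ.adj b a
      · obtain ⟨w, hw, hwB, hq₁, hq₂⟩ := IH X₁ (insert b X₂) h₁
          (by rw [Finset.coe_insert]; exact Set.insert_subset hbl h₂)
          (by rw [Finset.disjoint_right]
              intro x hx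
              rcases Finset.mem_insert.mp hx with rfl | hx
              · exact fun hmem => hbX (Finset.mem_union_left _ hmem)
              · exact fun hmem => (Finset.disjoint_left.mp hd hmem) hx)
        refine ⟨w, hw, ?_, hq₁, fun x hx => hq₂ x (Finset.mem_insert_of_mem hx)⟩
        intro hmem
        rcases Finset.mem_insert.mp hmem with rfl | hmem
        · exact hq₂ b (Finset.mem_insert_self _ _) hab
        · exact hwB hmem
      · obtain ⟨w, hw, hwB, hq₁, hq₂⟩ := IH (insert b X₁) X₂
          (by rw [Finset.coe_insert]; exact Set.insert_subset hbl h₁) h₂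
          (by rw [Finset.disjoint_left]
              intro x hx
              rcases Finset.mem_insert.mp hx with rfl | hx
              · exact fun hmem => hbX (Finset.mem_union_right _ hmem)
              · exact fun hmem => (Finset.disjoint_left.mp hd hx) hmem)
        refine ⟨w, hw, ?_, fun x hx => hq₁ x (Finset.mem_insert_of_mem hx), hq₂⟩
        intro hmem
        rcases Finset.mem_insert.mp hmem with rfl | hmem
        · exact hab (hq₁ b (Finset.mem_insert_self _ _))
        · exact hwB hmem
    · exact ⟨v, hv, by simp [hva, hvB], hp₁, hp₂⟩

end BipartiteGraph


namespace BipartiteGraph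

section BackForth

open scoped Classical

variable {V : Type*} (Γ₁ Γ₂ : BipartiteGraph V)

/-- A finite partial isomorphism from `Γ₁` to `Γ₂` (same sides), given by its graph. -/
def Good (p : Finset (V × V)) : Prop :=
  (∀ q ∈ p, ((q : V × V).1 ∈ Γ₁.left ↔ (q : V × V).2 ∈ Γ₁.left) ∧
    ((q : V × V).1 ∈ Γ₁.right ↔ (q : V × V).2 ∈ Γ₁.right)) ∧
  (∀ q ∈ p, ∀ q' ∈ p, ((q : V × V).1 = (q' : V × V).1 ↔ (q : V × V).2 = (q' : V × V).2)) ∧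
  (∀ q ∈ p, ∀ q' ∈ p, (q : V × V).1 ∈ Γ₁.left → (q' : V × V).1 ∈ Γ₁.right →
    (Γ₁.adj (q : V × V).1 (q' : V × V).1 ↔ Γ₂.adj (q : V × V).2 (q' : V × V).2))

variable {Γ₁ Γ₂}

lemma Good.mono {p p' : Finset (V × V)} (h : Good Γ₁ Γ₂ p') (hsub : p ⊆ p') :
    Good Γ₁ Γ₂ p :=
  ⟨fun q hq => h.1 q (hsub hq), fun q hq q' hq' => h.2.1 q (hsub hq) q' (hsub hq'),
   fun q hq q' hq' => h.2.2 q (hsub hq) q' (hsub hq')⟩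

lemma forth (h1 : Γ₁.IsRandom) (h2 : Γ₂.IsRandom) (hl : Γ₂.left = Γ₁.left)
    (hr : Γ₂.right = Γ₁.right) (p : Finset (V × V)) (hp : Good Γ₁ Γ₂ p) (x : V) :
    ∃ y, Good Γ₁ Γ₂ (insert (x, y) p) := by
  classical
  by_cases hxd : ∃ y, (x, y) ∈ p
  · obtain ⟨y, hy⟩ := hxd
    exact ⟨y, by rwa [Finset.insert_eq_self.mpr hy]⟩
  push_neg at hxd
  rcases Γ₁.mem_left_or_right x with hx | hx
  · -- x on the left : find its image via ext_right of Γ₂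
    set X₁ : Finset V := (p.filter (fun q => q.1 ∈ Γ₁.right ∧ Γ₁.adj x q.1)).image Prod.snd
      with hX₁
    set X₂ : Finset V := (p.filter (fun q => q.1 ∈ Γ₁.right ∧ ¬ Γ₁.adj x q.1)).image Prod.snd
      with hX₂
    have hX₁r : ↑X₁ ⊆ Γ₂.right := by
      intro z hz
      simp only [hX₁, Finset.coe_image, Set.mem_image, Finset.mem_coe,
        Finset.mem_filter] at hz
      obtain ⟨q, ⟨hq, hq1, _⟩, rfl⟩ := hz
      rw [hr]; exact ((hp.1 q hq).2).mp hq1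
    have hX₂r : ↑X₂ ⊆ Γ₂.right := by
      intro z hz
      simp only [hX₂, Finset.coe_image, Set.mem_image, Finset.mem_coe,
        Finset.mem_filter] at hz
      obtain ⟨q, ⟨hq, hq1, _⟩, rfl⟩ := hz
      rw [hr]; exact ((hp.1 q hq).2).mp hq1
    have hdisj : Disjoint X₁ X₂ := by
      rw [Finset.disjoint_left]
      intro z hz1 hz2
      simp only [hX₁, hX₂, Finset.mem_image, Finset.mem_filter] at hz1 hz2
      obtain ⟨q, ⟨hq, hq1, hqa⟩, hq2⟩ := hz1
      obtain ⟨q', ⟨hq', hq'1, hq'a⟩, hq'2⟩ := hz2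
      have : q.1 = q'.1 := (hp.2.1 q hq q' hq').mpr (hq2.trans hq'2.symm)
      exact hq'a (this ▸ hqa)
    obtain ⟨y, hyl, hyB, hy₁, hy₂⟩ := Γ₂.ext_right_avoid h2 (p.image Prod.snd) X₁ X₂ hX₁r hX₂r hdisj
    rw [hl] at hyl
    refine ⟨y, ?_, ?_, ?_⟩
    · -- sides
      intro q hq
      rcases Finset.mem_insert.mp hq with rfl | hq
      · exact ⟨by simp [hx, hyl], by simp [Γ₁.not_right_of_left hx, Γ₁.not_right_of_left hyl]⟩
      · exact hp.1 q hq
    · -- functionality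
      intro q hq q' hq'
      rcases Finset.mem_insert.mp hq with rfl | hq <;>
        rcases Finset.mem_insert.mp hq' with rfl | hq'
      · simp
      · constructor
        · intro h
          have hq'' : q' = (x, q'.2) := Prod.ext h.symm rfl
          exact absurd (hq'' ▸ hq') (hxd q'.2)
        · intro h
          have : q'.2 ∈ p.image Prod.snd := Finset.mem_image_of_mem Prod.snd hq'
          rw [← h] at this
          exact absurd this hyB
      · constructor
        · intro h
          have hq'' : q = (x, q.2) := Prod.ext h rfl
          exact absurd (hq'' ▸ hq) (hxd q.2)
        · intro h
          have : q.2 ∈ p.image Prod.snd := Finset.mem_image_of_mem Prod.snd hq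
          rw [h] at this
          exact absurd this hyB
      · exact hp.2.1 q hq q' hq'
    · -- iso
      intro q hq q' hq' hql hq'r
      rcases Finset.mem_insert.mp hq with rfl | hq <;>
        rcases Finset.mem_insert.mp hq' with rfl | hq'
      · exact absurd hq'r (Γ₁.not_right_of_left hx)
      · -- q = (x, y), q' ∈ p with q'.1 ∈ right
        by_cases hadj : Γ₁.adj x q'.1
        · have : q'.2 ∈ X₁ := Finset.mem_image_of_mem Prod.snd
            (Finset.mem_filter.mpr ⟨hq', hq'r, hadj⟩)
          simpa [hadj] using hy₁ _ this
        · have : q'.2 ∈ X₂ := Finset.mem_image_of_mem Prod.snd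
            (Finset.mem_filter.mpr ⟨hq', hq'r, hadj⟩)
          simpa [hadj] using hy₂ _ this
      · exact absurd hq'r (Γ₁.not_right_of_left hx)
      · exact hp.2.2 q hq q' hq' hql hq'r
  · -- x on the right : symmetric, using ext_left of Γ₂
    set X₁ : Finset V := (p.filter (fun q => q.1 ∈ Γ₁.left ∧ Γ₁.adj q.1 x)).image Prod.snd
      with hX₁
    set X₂ : Finset V := (p.filter (fun q => q.1 ∈ Γ₁.left ∧ ¬ Γ₁.adj q.1 x)).image Prod.snd
      with hX₂
    have hX₁l : ↑X₁ ⊆ Γ₂.left := by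
      intro z hz
      simp only [hX₁, Finset.coe_image, Set.mem_image, Finset.mem_coe,
        Finset.mem_filter] at hz
      obtain ⟨q, ⟨hq, hq1, _⟩, rfl⟩ := hz
      rw [hl]; exact ((hp.1 q hq).1).mp hq1
    have hX₂l : ↑X₂ ⊆ Γ₂.left := by
      intro z hz
      simp only [hX₂, Finset.coe_image, Set.mem_image, Finset.mem_coe,
        Finset.mem_filter] at hz
      obtain ⟨q, ⟨hq, hq1, _⟩, rfl⟩ := hz
      rw [hl]; exact ((hp.1 q hq).1).mp hq1
    have hdisj : Disjoint X₁ X₂ := by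
      rw [Finset.disjoint_left]
      intro z hz1 hz2
      simp only [hX₁, hX₂, Finset.mem_image, Finset.mem_filter] at hz1 hz2
      obtain ⟨q, ⟨hq, hq1, hqa⟩, hq2⟩ := hz1
      obtain ⟨q', ⟨hq', hq'1, hq'a⟩, hq'2⟩ := hz2
      have : q.1 = q'.1 := (hp.2.1 q hq q' hq').mpr (hq2.trans hq'2.symm)
      exact hq'a (this ▸ hqa)
    obtain ⟨y, hyr, hyB, hy₁, hy₂⟩ := Γ₂.ext_left_avoid h2 (p.image Prod.snd) X₁ X₂ hX₁l hX₂l hdisj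
    rw [hr] at hyr
    refine ⟨y, ?_, ?_, ?_⟩
    · intro q hq
      rcases Finset.mem_insert.mp hq with rfl | hq
      · exact ⟨by simp [Γ₁.not_left_of_right hx, Γ₁.not_left_of_right hyr], by simp [hx, hyr]⟩
      · exact hp.1 q hq
    · intro q hq q' hq'
      rcases Finset.mem_insert.mp hq with rfl | hq <;>
        rcases Finset.mem_insert.mp hq' with rfl | hq'
      · simp
      · constructor
        · intro h
          have hq'' : q' = (x, q'.2) := Prod.ext h.symm rfl
          exact absurd (hq'' ▸ hq') (hxd q'.2)
        · intro h
          have : q'.2 ∈ p.image Prod.snd := Finset.mem_image_of_mem Prod.snd hq'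
          rw [← h] at this
          exact absurd this hyB
      · constructor
        · intro h
          have hq'' : q = (x, q.2) := Prod.ext h rfl
          exact absurd (hq'' ▸ hq) (hxd q.2)
        · intro h
          have : q.2 ∈ p.image Prod.snd := Finset.mem_image_of_mem Prod.snd hq
          rw [h] at this
          exact absurd this hyB
      · exact hp.2.1 q hq q' hq'
    · intro q hq q' hq' hql hq'r
      rcases Finset.mem_insert.mp hq with rfl | hq <;>
        rcases Finset.mem_insert.mp hq' with rfl | hq'
      · exact absurd hql (Γ₁.not_left_of_right hx)
      · exact absurd hql (Γ₁.not_left_of_right hx)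
      · -- q ∈ p with q.1 ∈ left, q' = (x, y)
        by_cases hadj : Γ₁.adj q.1 x
        · have : q.2 ∈ X₁ := Finset.mem_image_of_mem Prod.snd
            (Finset.mem_filter.mpr ⟨hq, hql, hadj⟩)
          simpa [hadj] using hy₁ _ this
        · have : q.2 ∈ X₂ := Finset.mem_image_of_mem Prod.snd
            (Finset.mem_filter.mpr ⟨hq, hql, hadj⟩)
          simpa [hadj] using hy₂ _ this
      · exact hp.2.2 q hq q' hq' hql hq'r


lemma Good.swap {p : Finset (V × V)} (hl : Γ₂.left = Γ₁.left) (hr : Γ₂.right = Γ₁.right)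
    (hp : Good Γ₁ Γ₂ p) : Good Γ₂ Γ₁ (p.image Prod.swap) := by
  classical
  refine ⟨?_, ?_, ?_⟩
  · intro q hq
    obtain ⟨q₀, hq₀, rfl⟩ := Finset.mem_image.mp hq
    obtain ⟨hL, hR⟩ := hp.1 q₀ hq₀
    rw [hl, hr]
    exact ⟨⟨hL.mpr, hL.mp⟩, ⟨hR.mpr, hR.mp⟩⟩
  · intro q hq q' hq'
    obtain ⟨q₀, hq₀, rfl⟩ := Finset.mem_image.mp hq
    obtain ⟨q₀', hq₀', rfl⟩ := Finset.mem_image.mp hq'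
    exact (hp.2.1 q₀ hq₀ q₀' hq₀').symm
  · intro q hq q' hq' hql hq'r
    obtain ⟨q₀, hq₀, rfl⟩ := Finset.mem_image.mp hq
    obtain ⟨q₀', hq₀', rfl⟩ := Finset.mem_image.mp hq'
    rw [hl] at hql
    rw [hr] at hq'r
    have h1 := ((hp.1 q₀ hq₀).1).mpr hql
    have h2 := ((hp.1 q₀' hq₀').2).mpr hq'r
    exact (hp.2.2 q₀ hq₀ q₀' hq₀' h1 h2).symm

lemma back (h1 : Γ₁.IsRandom) (h2 : Γ₂.IsRandom) (hl : Γ₂.left = Γ₁.left)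
    (hr : Γ₂.right = Γ₁.right) (p : Finset (V × V)) (hp : Good Γ₁ Γ₂ p) (y : V) :
    ∃ x, Good Γ₁ Γ₂ (insert (x, y) p) := by
  classical
  obtain ⟨x, hx⟩ := forth (Γ₁ := Γ₂) (Γ₂ := Γ₁) h2 h1 hl.symm hr.symm (p.image Prod.swap)
    (hp.swap hl hr) y
  refine ⟨x, ?_⟩
  have h := hx.swap hl.symm hr.symm
  rw [Finset.image_insert] at h
  simpa [Finset.image_image, Function.comp_def, Prod.swap_swap, Finset.image_id'] using h

/-- The back-and-forth construction: a finite partial isomorphism between two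
random bipartite graphs with the same sides extends to a global isomorphism. -/
lemma exists_perm_iso (h1 : Γ₁.IsRandom) (h2 : Γ₂.IsRandom) (hl : Γ₂.left = Γ₁.left)
    (hr : Γ₂.right = Γ₁.right) (p₀ : Finset (V × V)) (hp₀ : Good Γ₁ Γ₂ p₀) :
    ∃ g : Equiv.Perm V,
      (∀ v, g v ∈ Γ₁.left ↔ v ∈ Γ₁.left) ∧ (∀ v, g v ∈ Γ₁.right ↔ v ∈ Γ₁.right) ∧
      (∀ a ∈ Γ₁.left, ∀ b ∈ Γ₁.right, (Γ₁.adj a b ↔ Γ₂.adj (g a) (g b))) ∧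
      (∀ q ∈ p₀, g (q : V × V).1 = (q : V × V).2) := by
  classical
  haveI : Countable V := h1.countable
  obtain ⟨v₀, -⟩ := Γ₁.left_nonempty
  haveI : Nonempty V := ⟨v₀⟩
  obtain ⟨e, he⟩ := exists_surjective_nat V
  -- one step of the construction
  have step : ∀ (q : {q : Finset (V × V) // Good Γ₁ Γ₂ q}) (z : V),
      ∃ q' : {q : Finset (V × V) // Good Γ₁ Γ₂ q},
        q.1 ⊆ q'.1 ∧ (∃ w, (z, w) ∈ q'.1) ∧ (∃ w, (w, z) ∈ q'.1) := by
    rintro ⟨q, hq⟩ z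
    obtain ⟨y, hy⟩ := forth h1 h2 hl hr q hq z
    obtain ⟨x, hx⟩ := back h1 h2 hl hr (insert (z, y) q) hy z
    refine ⟨⟨insert (x, z) (insert (z, y) q), hx⟩, ?_, ⟨y, ?_⟩, ⟨x, ?_⟩⟩
    · exact (Finset.subset_insert _ _).trans (Finset.subset_insert _ _) |>.trans
        (le_refl _)
    · exact Finset.mem_insert_of_mem (Finset.mem_insert_self _ _)
    · exact Finset.mem_insert_self _ _
  let S : ℕ → {q : Finset (V × V) // Good Γ₁ Γ₂ q} :=
    fun n => Nat.rec ⟨p₀, hp₀⟩ (fun n q => (step q (e n)).choose) n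
  have hS_succ : ∀ n, (S n).1 ⊆ (S (n + 1)).1 := fun n => (step (S n) (e n)).choose_spec.1
  have hS_mono : ∀ m n, m ≤ n → (S m).1 ⊆ (S n).1 := by
    intro m n hmn
    induction n with
    | zero => rw [Nat.le_zero.mp hmn]
    | succ n IH =>
      rcases Nat.lt_or_ge m (n + 1) with h | h
      · exact (IH (Nat.lt_succ_iff.mp h)).trans (hS_succ n)
      · rw [Nat.le_antisymm hmn h]
  have hS_dom : ∀ n, ∃ w, (e n, w) ∈ (S (n + 1)).1 :=
    fun n => (step (S n) (e n)).choose_spec.2.1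
  have hS_cod : ∀ n, ∃ w, (w, e n) ∈ (S (n + 1)).1 :=
    fun n => (step (S n) (e n)).choose_spec.2.2
  -- totality
  have htot : ∀ x, ∃ y, ∃ n, (x, y) ∈ (S n).1 := by
    intro x
    obtain ⟨n, rfl⟩ := he x
    obtain ⟨w, hw⟩ := hS_dom n
    exact ⟨w, n + 1, hw⟩
  -- uniqueness across levels
  have key : ∀ (x y x' y' : V) (m n : ℕ), (x, y) ∈ (S m).1 → (x', y') ∈ (S n).1 →
      (x = x' ↔ y = y') := by
    intro x y x' y' m n hm hn
    have h₁ : (x, y) ∈ (S (max m n)).1 := hS_mono m (max m n) (le_max_left _ _) hm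
    have h₂ : (x', y') ∈ (S (max m n)).1 := hS_mono n (max m n) (le_max_right _ _) hn
    exact (S (max m n)).2.2.1 (x, y) h₁ (x', y') h₂
  let f : V → V := fun x => (htot x).choose
  have hf : ∀ x, ∃ n, (x, f x) ∈ (S n).1 := fun x => (htot x).choose_spec
  have hinj : Function.Injective f := by
    intro x x' hxx
    obtain ⟨n, hn⟩ := hf x
    obtain ⟨m, hm⟩ := hf x'
    rw [hxx] at hn
    exact (key _ _ _ _ _ _ hn hm).mpr rfl
  have hsurj : Function.Surjective f := by
    intro y
    obtain ⟨n, rfl⟩ := he y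
    obtain ⟨x, hx⟩ := hS_cod n
    obtain ⟨m, hm⟩ := hf x
    exact ⟨x, (key x (f x) x (e n) m (n + 1) hm hx).mp rfl⟩
  refine ⟨Equiv.ofBijective f ⟨hinj, hsurj⟩, ?_, ?_, ?_, ?_⟩
  · intro v
    obtain ⟨n, hn⟩ := hf v
    exact ((S n).2.1 (v, f v) hn).1.symm
  · intro v
    obtain ⟨n, hn⟩ := hf v
    exact ((S n).2.1 (v, f v) hn).2.symm
  · intro a ha b hb
    obtain ⟨n, hn⟩ := hf a
    obtain ⟨m, hm⟩ := hf b
    have h₁ : (a, f a) ∈ (S (max n m)).1 := hS_mono n (max n m) (le_max_left _ _) hn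
    have h₂ : (b, f b) ∈ (S (max n m)).1 := hS_mono m (max n m) (le_max_right _ _) hm
    exact (S (max n m)).2.2.2 (a, f a) h₁ (b, f b) h₂ ha hb
  · intro q hq
    obtain ⟨n, hn⟩ := hf q.1
    have hq₀ : ((q : V × V).1, (q : V × V).2) ∈ (S 0).1 := by exact hq
    exact (key q.1 (f q.1) q.1 q.2 n 0 hn hq₀).mp rfl

end BackForth

end BipartiteGraph


namespace BipartiteGraph

variable {V : Type*} (Γ : BipartiteGraph V)

/-- The graph obtained from `Γ` by switching with respect to the set `A`. -/
def twist (A : Set V) : BipartiteGraph V where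
  left := Γ.left
  right := Γ.right
  adj a b := a ∈ Γ.left ∧ b ∈ Γ.right ∧ Xor' (Γ.adj a b) (a ∈ A ∨ b ∈ A)
  left_nonempty := Γ.left_nonempty
  right_nonempty := Γ.right_nonempty
  union_eq := Γ.union_eq
  disjoint_sides := Γ.disjoint_sides
  adj_dom := fun _ _ h => ⟨h.1, h.2.1⟩

lemma twist_left (A : Set V) : (Γ.twist A).left = Γ.left := rfl
lemma twist_right (A : Set V) : (Γ.twist A).right = Γ.right := rfl

lemma twist_adj_iff {A : Set V} {a b : V} (ha : a ∈ Γ.left) (hb : b ∈ Γ.right) :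
    (Γ.twist A).adj a b ↔ Xor' (Γ.adj a b) (a ∈ A ∨ b ∈ A) := by
  simp [twist, ha, hb]

lemma twist_isRandom (hΓ : Γ.IsRandom) (A : Finset V) : (Γ.twist ↑A).IsRandom := by
  classical
  constructor
  · exact hΓ.countable
  · exact hΓ.left_infinite
  · exact hΓ.right_infinite
  · -- ext_left
    intro X₁ X₂ h₁ h₂ hd
    set Y₁ : Finset V := X₁.filter (· ∉ A) ∪ X₂.filter (· ∈ A) with hY₁
    set Y₂ : Finset V := X₂.filter (· ∉ A) ∪ X₁.filter (· ∈ A) with hY₂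
    have hY₁l : ↑Y₁ ⊆ Γ.left := by
      intro x hx
      simp only [hY₁, Finset.coe_union, Set.mem_union, Finset.coe_filter, Set.mem_setOf_eq] at hx
      rcases hx with ⟨hx, -⟩ | ⟨hx, -⟩
      · exact h₁ hx
      · exact h₂ hx
    have hY₂l : ↑Y₂ ⊆ Γ.left := by
      intro x hx
      simp only [hY₂, Finset.coe_union, Set.mem_union, Finset.coe_filter, Set.mem_setOf_eq] at hx
      rcases hx with ⟨hx, -⟩ | ⟨hx, -⟩
      · exact h₂ hx
      · exact h₁ hx
    have hdY : Disjoint Y₁ Y₂ := by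
      rw [Finset.disjoint_left]
      intro x hx1 hx2
      simp only [hY₁, hY₂, Finset.mem_union, Finset.mem_filter] at hx1 hx2
      rcases hx1 with ⟨hx1, hA1⟩ | ⟨hx1, hA1⟩ <;> rcases hx2 with ⟨hx2, hA2⟩ | ⟨hx2, hA2⟩
      · exact Finset.disjoint_left.mp hd hx1 hx2
      · exact hA1 hA2
      · exact hA2 hA1
      · exact Finset.disjoint_left.mp hd hx2 hx1
    obtain ⟨v, hvr, hvA, hp₁, hp₂⟩ := Γ.ext_left_avoid hΓ A Y₁ Y₂ hY₁l hY₂l hdY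
    refine ⟨v, hvr, ?_, ?_⟩
    · intro x hx
      rw [Γ.twist_adj_iff (h₁ hx) hvr]
      by_cases hxA : x ∈ A
      · have : ¬ Γ.adj x v := hp₂ x (by simp [hY₂, hx, hxA])
        simp [Xor', this, hxA]
      · have : Γ.adj x v := hp₁ x (by simp [hY₁, hx, hxA])
        simp [Xor', this, hxA, hvA]
    · intro x hx
      rw [Γ.twist_adj_iff (h₂ hx) hvr]
      by_cases hxA : x ∈ A
      · have : Γ.adj x v := hp₁ x (by simp [hY₁, hx, hxA])
        simp [Xor', this, hxA]
      · have : ¬ Γ.adj x v := hp₂ x (by simp [hY₂, hx, hxA])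
        simp [Xor', this, hxA, hvA]
  · -- ext_right
    intro X₁ X₂ h₁ h₂ hd
    set Y₁ : Finset V := X₁.filter (· ∉ A) ∪ X₂.filter (· ∈ A) with hY₁
    set Y₂ : Finset V := X₂.filter (· ∉ A) ∪ X₁.filter (· ∈ A) with hY₂
    have hY₁r : ↑Y₁ ⊆ Γ.right := by
      intro x hx
      simp only [hY₁, Finset.coe_union, Set.mem_union, Finset.coe_filter, Set.mem_setOf_eq] at hx
      rcases hx with ⟨hx, -⟩ | ⟨hx, -⟩
      · exact h₁ hx
      · exact h₂ hx
    have hY₂r : ↑Y₂ ⊆ Γ.right := by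
      intro x hx
      simp only [hY₂, Finset.coe_union, Set.mem_union, Finset.coe_filter, Set.mem_setOf_eq] at hx
      rcases hx with ⟨hx, -⟩ | ⟨hx, -⟩
      · exact h₂ hx
      · exact h₁ hx
    have hdY : Disjoint Y₁ Y₂ := by
      rw [Finset.disjoint_left]
      intro x hx1 hx2
      simp only [hY₁, hY₂, Finset.mem_union, Finset.mem_filter] at hx1 hx2
      rcases hx1 with ⟨hx1, hA1⟩ | ⟨hx1, hA1⟩ <;> rcases hx2 with ⟨hx2, hA2⟩ | ⟨hx2, hA2⟩
      · exact Finset.disjoint_left.mp hd hx1 hx2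
      · exact hA1 hA2
      · exact hA2 hA1
      · exact Finset.disjoint_left.mp hd hx2 hx1
    obtain ⟨v, hvl, hvA, hp₁, hp₂⟩ := Γ.ext_right_avoid hΓ A Y₁ Y₂ hY₁r hY₂r hdY
    refine ⟨v, hvl, ?_, ?_⟩
    · intro x hx
      rw [Γ.twist_adj_iff hvl (h₁ hx)]
      by_cases hxA : x ∈ A
      · have : ¬ Γ.adj v x := hp₂ x (by simp [hY₂, hx, hxA])
        simp [Xor', this, hxA]
      · have : Γ.adj v x := hp₁ x (by simp [hY₁, hx, hxA])
        simp [Xor', this, hxA, hvA]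
    · intro x hx
      rw [Γ.twist_adj_iff hvl (h₂ hx)]
      by_cases hxA : x ∈ A
      · have : Γ.adj v x := hp₁ x (by simp [hY₁, hx, hxA])
        simp [Xor', this, hxA]
      · have : ¬ Γ.adj v x := hp₂ x (by simp [hY₂, hx, hxA])
        simp [Xor', this, hxA, hvA]

/-- Existence of switches with respect to a finite subset of one side,
extending a prescribed finite partial switch. -/
lemma exists_switch_extending (hΓ : Γ.IsRandom) {i : BSide} (A : Finset V)
    (hA : ↑A ⊆ Γ.side i) (p₀ : Finset (V × V)) (hp₀ : Good (Γ.twist ↑A) Γ p₀) :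
    ∃ s : Equiv.Perm V, Γ.IsSwitch s ↑A ∧ ∀ q ∈ p₀, s (q : V × V).1 = (q : V × V).2 := by
  obtain ⟨g, hgl, hgr, hgiso, hgext⟩ := exists_perm_iso (Γ₁ := Γ.twist ↑A) (Γ₂ := Γ)
    (Γ.twist_isRandom hΓ A) hΓ rfl rfl p₀ hp₀
  refine ⟨g, ⟨⟨hgl, hgr⟩, ?_⟩, hgext⟩
  intro a ha b hb
  have h := hgiso a ha b hb
  rw [Γ.twist_adj_iff ha hb] at h
  simp only [ne_eq, pair_ncard_eq_one_iff (Γ.not_both_mem_side hA ha hb)]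
  rw [Xor', xor_def] at h
  tauto

set_option maxHeartbeats 1000000 in
/-- Any switch with respect to a finite subset of a side belongs to the
corresponding switch group. -/
lemma switch_finset_mem (hΓ : Γ.IsRandom) (i : BSide) (A : Finset V)
    (hA : ↑A ⊆ Γ.side i) :
    ∀ s : Equiv.Perm V, Γ.IsSwitch s ↑A → s ∈ Γ.switchGroup {i} := by
  classical
  induction A using Finset.induction with
  | empty =>
    intro s hs
    -- s is an automorphism
    have hsa : s ∈ Γ.autGroup := by
      refine ⟨hs.1, fun a b => ?_⟩
      by_cases hab : a ∈ Γ.left ∧ b ∈ Γ.right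
      · have := (hs.2 a hab.1 b hab.2).mpr (by simp)
        exact this
      · constructor
        · intro h; exact absurd (Γ.adj_dom a b h) hab
        · intro h
          have := Γ.adj_dom _ _ h
          rw [(hs.1).1 a, (hs.1).2 b] at this
          exact absurd this hab
    rw [switchGroup, closedClosure, Subgroup.mem_sInf]
    rintro G ⟨-, hG⟩
    exact hG (Or.inl hsa)
  | @insert v A' hv IH =>
    intro s hs
    have hvside : v ∈ Γ.side i := hA (by simp)
    have hA' : ↑A' ⊆ Γ.side i := by
      refine subset_trans ?_ hA
      simp only [Finset.coe_insert]
      exact fun x hx => Set.mem_insert_of_mem _ hx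
    -- find a one-vertex switch t with t v = s v
    have hp₀ : Good (Γ.twist ↑({v} : Finset V)) Γ {(v, s v)} := by
      refine ⟨?_, ?_, ?_⟩
      · intro q hq
        rw [Finset.mem_singleton] at hq
        subst hq
        have h1 := (hs.1).1 v
        have h2 := (hs.1).2 v
        exact ⟨by rw [twist_left]; exact h1.symm, by rw [twist_right]; exact h2.symm⟩
      · intro q hq q' hq'
        rw [Finset.mem_singleton] at hq hq'
        subst hq; subst hq'; simp
      · intro q hq q' hq' hql hq'r
        rw [Finset.mem_singleton] at hq hq'
        subst hq; subst hq'
        rw [twist_left] at hql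
        rw [twist_right] at hq'r
        exact absurd hq'r (Γ.not_right_of_left hql)
    have hvs : ↑({v} : Finset V) ⊆ Γ.side i := by simpa using hvside
    obtain ⟨t, ht, htv⟩ := Γ.exists_switch_extending hΓ ({v} : Finset V) hvs _ hp₀
    have htv' : t v = s v := htv (v, s v) (Finset.mem_singleton_self _)
    -- t is a generator
    have htmem : t ∈ Γ.switchGroup {i} := by
      rw [switchGroup, closedClosure, Subgroup.mem_sInf]
      rintro G ⟨-, hG⟩
      refine hG (Or.inr ⟨i, rfl, v, hvside, ?_⟩)
      simpa using ht
    -- t⁻¹ * s is a switch with respect to A'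
    have hkey : Γ.IsSwitch (t⁻¹ * s) ↑A' := by
      refine ⟨mul_mem (inv_mem ht.1) hs.1, ?_⟩
      intro a ha b hb
      have hsa : s a ∈ Γ.left := ((hs.1).1 a).mpr ha
      have hsb : s b ∈ Γ.right := ((hs.1).2 b).mpr hb
      have hta : t⁻¹ (s a) ∈ Γ.left := ((inv_mem ht.1).1 (s a)).mpr hsa
      have htb : t⁻¹ (s b) ∈ Γ.right := ((inv_mem ht.1).2 (s b)).mpr hsb
      have h1 : (Γ.adj a b ↔ Γ.adj (s a) (s b)) ↔
          ¬ ((a = v ∨ a ∈ A') ∨ (b = v ∨ b ∈ A')) := by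
        have := hs.2 a ha b hb
        simp only [ne_eq, pair_ncard_eq_one_iff (Γ.not_both_mem_side hA ha hb)] at this
        rw [this]
        simp [Finset.mem_insert]
      have h2 : (Γ.adj (t⁻¹ (s a)) (t⁻¹ (s b)) ↔ Γ.adj (s a) (s b)) ↔
          ¬ (a = v ∨ b = v) := by
        have hone : ↑({v} : Finset V) ⊆ Γ.side i := hvs
        have key := ht.2 (t⁻¹ (s a)) hta (t⁻¹ (s b)) htb
        simp only [ne_eq, pair_ncard_eq_one_iff (Γ.not_both_mem_side hone hta htb)] at key
        rw [Equiv.Perm.coe_inv, Equiv.apply_symm_apply, Equiv.apply_symm_apply,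
          ← Equiv.Perm.coe_inv] at key
        have e1 : t⁻¹ (s a) = v ↔ a = v := by
          rw [Equiv.Perm.inv_eq_iff_eq, htv', Equiv.apply_eq_iff_eq]
        have e2 : t⁻¹ (s b) = v ↔ b = v := by
          rw [Equiv.Perm.inv_eq_iff_eq, htv', Equiv.apply_eq_iff_eq]
        simp only [Finset.coe_singleton, Set.mem_singleton_iff] at key
        rw [e1, e2] at key
        exact key
      have hC : ¬ ((a = v ∨ a ∈ A') ∧ (b = v ∨ b ∈ A')) := by
        have := Γ.not_both_mem_side hA ha hb
        simp only [Finset.coe_insert, Set.mem_insert_iff, Finset.mem_coe] at this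
        exact this
      have hav : a = v → a ∉ A' := fun h => h ▸ hv
      have hbv : b = v → b ∉ A' := fun h => h ▸ hv
      simp only [ne_eq, pair_ncard_eq_one_iff (Γ.not_both_mem_side hA' ha hb),
        Finset.mem_coe]
      show (Γ.adj a b ↔ Γ.adj (t⁻¹ (s a)) (t⁻¹ (s b))) ↔ ¬ (a ∈ A' ∨ b ∈ A')
      clear hp₀ htv IH hA hvs hsa hsb hta htb htmem ht hs hΓ htv' hvside hA'
      revert h1 h2 hC hav hbv
      generalize Γ.adj a b = P
      generalize Γ.adj (s a) (s b) = Q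
      generalize Γ.adj (t⁻¹ (s a)) (t⁻¹ (s b)) = R
      generalize (a ∈ A') = pa
      generalize (b ∈ A') = pb
      generalize (a = v) = ea
      generalize (b = v) = eb
      intro h1 h2 hC hav hbv
      tauto
    have := IH hA' (t⁻¹ * s) hkey
    have : s = t * (t⁻¹ * s) := by group
    rw [this]
    exact mul_mem htmem (IH hA' (t⁻¹ * s) hkey)

/-- Any switch with respect to the whole left side belongs to both switch groups. -/
lemma rho_mem (hΓ : Γ.IsRandom) (i : BSide) (ρ : Equiv.Perm V)
    (hρ : Γ.IsSwitch ρ Γ.left) : ρ ∈ Γ.switchGroup {i} := by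
  classical
  rw [switchGroup, closedClosure, Subgroup.mem_sInf]
  rintro G ⟨hGc, hGs⟩
  apply hGc
  intro F
  set A : Finset V := F.filter (· ∈ Γ.side i) with hA
  have hAs : ↑A ⊆ Γ.side i := by
    intro x hx
    simp only [hA, Finset.coe_filter, Set.mem_setOf_eq] at hx
    exact hx.2
  have hp₀ : Good (Γ.twist ↑A) Γ (F.image fun x => (x, ρ x)) := by
    refine ⟨?_, ?_, ?_⟩
    · intro q hq
      obtain ⟨x, hx, rfl⟩ := Finset.mem_image.mp hq
      exact ⟨by rw [twist_left]; exact ((hρ.1).1 x).symm,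
        by rw [twist_right]; exact ((hρ.1).2 x).symm⟩
    · intro q hq q' hq'
      obtain ⟨x, hx, rfl⟩ := Finset.mem_image.mp hq
      obtain ⟨x', hx', rfl⟩ := Finset.mem_image.mp hq'
      simp only
      constructor
      · intro h; rw [h]
      · intro h; exact ρ.injective h
    · intro q hq q' hq' hql hq'r
      obtain ⟨x, hx, rfl⟩ := Finset.mem_image.mp hq
      obtain ⟨x', hx', rfl⟩ := Finset.mem_image.mp hq'
      rw [twist_left] at hql
      rw [twist_right] at hq'r
      simp only at hql hq'r ⊢
      rw [Γ.twist_adj_iff hql hq'r]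
      -- exactly one of x, x' lies in side i, and it belongs to F, hence to A
      have hflag : x ∈ (↑A : Set V) ∨ x' ∈ (↑A : Set V) := by
        cases i with
        | l => left; simp only [hA, Finset.coe_filter, Set.mem_setOf_eq]; exact ⟨hx, hql⟩
        | r => right; simp only [hA, Finset.coe_filter, Set.mem_setOf_eq]; exact ⟨hx', hq'r⟩
      -- ρ reverses all cross-types
      have hrev : ¬ (Γ.adj x x' ↔ Γ.adj (ρ x) (ρ x')) := by
        have := hρ.2 x hql x' hq'r
        simp only [ne_eq, pair_ncard_eq_one_iff (fun h => Γ.not_right_of_left h.2 hq'r)] at this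
        tauto
      rw [Xor', xor_def]
      tauto
  obtain ⟨s, hs, hsF⟩ := Γ.exists_switch_extending hΓ A hAs _ hp₀
  refine ⟨s, ?_, ?_⟩
  · have : s ∈ Γ.switchGroup {i} := Γ.switch_finset_mem hΓ i A hAs s hs
    rw [switchGroup, closedClosure, Subgroup.mem_sInf] at this
    exact this G ⟨hGc, hGs⟩
  · intro x hx
    exact hsF (x, ρ x) (Finset.mem_image_of_mem _ hx)

end BipartiteGraph


/-- The other side. -/
def BSide.other : BSide → BSide
  | BSide.l => BSide.r
  | BSide.r => BSide.l

instance instDecidableXorPrime (a b : Prop) [Decidable a] [Decidable b] : Decidable (Xor' a b) :=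
  inferInstanceAs (Decidable (Xor a b))

/-- Parity of the number of elements satisfying the symmetric difference of two
predicates. -/
lemma even_filter_xor {α : Type*} (s : Finset α) (P Q : α → Prop)
    [DecidablePred P] [DecidablePred Q] :
    Even ((s.filter fun x => Xor' (P x) (Q x)).card) ↔
      (Even ((s.filter P).card) ↔ Even ((s.filter Q).card)) := by
  classical
  have h1 : (s.filter P).card =
      (s.filter fun x => P x ∧ Q x).card + (s.filter fun x => P x ∧ ¬ Q x).card := by
    rw [← Finset.filter_filter, ← Finset.filter_filter,
      Finset.card_filter_add_card_filter_not]
  have h2 : (s.filter Q).card =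
      (s.filter fun x => P x ∧ Q x).card + (s.filter fun x => ¬ P x ∧ Q x).card := by
    have e1 : s.filter (fun x => P x ∧ Q x) = (s.filter Q).filter P := by
      rw [Finset.filter_filter]
      exact Finset.filter_congr fun x _ => and_comm
    have e2 : s.filter (fun x => ¬ P x ∧ Q x) = (s.filter Q).filter (fun x => ¬ P x) := by
      rw [Finset.filter_filter]
      exact Finset.filter_congr fun x _ => and_comm
    rw [e1, e2, Finset.card_filter_add_card_filter_not]
  have h3 : (s.filter fun x => Xor' (P x) (Q x)).card =
      (s.filter fun x => P x ∧ ¬ Q x).card + (s.filter fun x => ¬ P x ∧ Q x).card := by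
    have e1 : s.filter (fun x => P x ∧ ¬ Q x) =
        (s.filter fun x => Xor' (P x) (Q x)).filter P := by
      rw [Finset.filter_filter]
      refine Finset.filter_congr fun x _ => ?_
      rw [Xor', xor_def]
      tauto
    have e2 : s.filter (fun x => ¬ P x ∧ Q x) =
        (s.filter fun x => Xor' (P x) (Q x)).filter (fun x => ¬ P x) := by
      rw [Finset.filter_filter]
      refine Finset.filter_congr fun x _ => ?_
      rw [Xor', xor_def]
      tauto
    rw [e1, e2, Finset.card_filter_add_card_filter_not]
  rw [h1, h2, h3, Nat.even_add, Nat.even_add, Nat.even_add]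
  tauto

/-- Parity of a two-element filter. -/
lemma even_filter_pair {α : Type*} {b b' : α} (h : b ≠ b') (P : α → Prop)
    [DecidablePred P] [DecidableEq α] :
    Even ((({b, b'} : Finset α).filter P).card) ↔ (P b ↔ P b') := by
  have hb' : b ∉ ({b'} : Finset α) := by simp [h]
  by_cases hb : P b <;> by_cases hbb : P b' <;>
    simp [Finset.filter_insert, Finset.filter_singleton, hb, hbb, hb',
      Finset.card_insert_of_notMem, Nat.even_add_one, Finset.mem_filter]

namespace BipartiteGraph

variable {V : Type*} (Γ : BipartiteGraph V)

open scoped Classical in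
/-- The number of edges spanned by a finite vertex set. -/
noncomputable def eCnt (S : Finset V) : ℕ :=
  ((S ×ˢ S).filter fun p => Γ.adj p.1 p.2).card

lemma side_iff {g : Equiv.Perm V} (hg : g ∈ Γ.symLR) (j : BSide) (x : V) :
    g x ∈ Γ.side j ↔ x ∈ Γ.side j := by
  cases j with
  | l => exact hg.1 x
  | r => exact hg.2 x

open scoped Classical in
lemma filter_side_image {g : Equiv.Perm V} (hg : g ∈ Γ.symLR) (j : BSide) (S : Finset V) :
    ((S.image g).filter (· ∈ Γ.side j)).card = (S.filter (· ∈ Γ.side j)).card := by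
  rw [Finset.filter_image]
  rw [Finset.filter_congr (fun x _ => Γ.side_iff hg j x)]
  exact Finset.card_image_of_injective _ g.injective

open scoped Classical in
lemma eCnt_image (g : Equiv.Perm V) (S : Finset V) :
    Γ.eCnt (S.image g) = ((S ×ˢ S).filter fun p => Γ.adj (g p.1) (g p.2)).card := by
  have hprod : (S.image g) ×ˢ (S.image g) = (S ×ˢ S).image (Prod.map g g) := by
    ext ⟨x, y⟩
    simp only [Finset.mem_product, Finset.mem_image, Prod.exists, Prod.map_apply,
      Prod.mk.injEq]
    constructor
    · rintro ⟨⟨a, ha, rfl⟩, ⟨b, hb, rfl⟩⟩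
      exact ⟨a, b, ⟨ha, hb⟩, rfl, rfl⟩
    · rintro ⟨a, b, ⟨ha, hb⟩, rfl, rfl⟩
      exact ⟨⟨a, ha, rfl⟩, ⟨b, hb, rfl⟩⟩
  rw [eCnt, hprod, Finset.filter_image]
  rw [Finset.card_image_of_injective]
  · rfl
  · intro p q hpq
    have h1 : g p.1 = g q.1 := congrArg Prod.fst hpq
    have h2 : g p.2 = g q.2 := congrArg Prod.snd hpq
    exact Prod.ext (g.injective h1) (g.injective h2)

open scoped Classical in
/-- The subgroup of side-preserving permutations preserving edge-parity on all
finite sets with an even number of vertices on side `j`. -/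
noncomputable def parityGroup (j : BSide) : Subgroup (Equiv.Perm V) where
  carrier := {g | g ∈ Γ.symLR ∧ ∀ S : Finset V, Even ((S.filter (· ∈ Γ.side j)).card) →
      (Even (Γ.eCnt S) ↔ Even (Γ.eCnt (S.image g)))}
  one_mem' := by
    refine ⟨one_mem _, fun S _ => ?_⟩
    have : S.image (1 : Equiv.Perm V) = S := by
      simp [Finset.image_id']
    rw [this]
  mul_mem' := by
    rintro a b ⟨haS, haP⟩ ⟨hbS, hbP⟩
    refine ⟨mul_mem haS hbS, fun S hS => ?_⟩
    have hS' : Even (((S.image ⇑b).filter (· ∈ Γ.side j)).card) := by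
      rwa [Γ.filter_side_image hbS]
    have hab : (S.image ⇑b).image ⇑a = S.image ⇑(a * b) := by
      rw [Finset.image_image]
      rfl
    rw [← hab]
    exact (hbP S hS).trans (haP (S.image ⇑b) hS')
  inv_mem' := by
    rintro a ⟨haS, haP⟩
    refine ⟨inv_mem haS, fun S hS => ?_⟩
    have hS' : Even (((S.image ⇑a⁻¹).filter (· ∈ Γ.side j)).card) := by
      rwa [Γ.filter_side_image (inv_mem haS)]
    have hback : (S.image ⇑a⁻¹).image ⇑a = S := by
      rw [Finset.image_image]
      have : (⇑a ∘ ⇑a⁻¹) = id := by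
        funext x
        simp
      rw [this, Finset.image_id]
    have := haP (S.image ⇑a⁻¹) hS'
    rw [hback] at this
    exact this.symm

lemma parityGroup_closed (j : BSide) : IsClosedSubgroup (Γ.parityGroup j) := by
  classical
  intro g hg
  constructor
  · constructor <;> intro v <;>
    · obtain ⟨h, hh, hagree⟩ := hg {v}
      have hv : h v = g v := hagree v (Finset.mem_singleton_self v)
      rw [← hv]
      first
        | exact (hh.1).1 v
        | exact (hh.1).2 v
  · intro S hS
    obtain ⟨h, hh, hagree⟩ := hg S
    have himg : S.image g = S.image h :=
      Finset.image_congr fun x hx => (hagree x hx).symm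
    rw [himg]
    exact hh.2 S hS

lemma aut_mem_parityGroup {g : Equiv.Perm V} (hg : g ∈ Γ.autGroup) (j : BSide) :
    g ∈ Γ.parityGroup j := by
  classical
  refine ⟨hg.1, fun S _ => ?_⟩
  rw [Γ.eCnt_image g S]
  rw [show ((S ×ˢ S).filter fun p => Γ.adj (g p.1) (g p.2)) =
      ((S ×ˢ S).filter fun p => Γ.adj p.1 p.2) from
    Finset.filter_congr fun p _ => (hg.2 p.1 p.2).symm]
  rfl

lemma switch_mem_parityGroup {g : Equiv.Perm V} {v : V} {i : BSide}
    (hv : v ∈ Γ.side i) (hg : Γ.IsSwitch g {v}) : g ∈ Γ.parityGroup i.other := by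
  classical
  refine ⟨hg.1, fun S hS => ?_⟩
  rw [Γ.eCnt_image g S]
  have hvnot : ¬ (v ∈ Γ.left ∧ v ∈ Γ.right) := fun h => Γ.not_right_of_left h.1 h.2
  have hpred : ∀ p ∈ S ×ˢ S, Γ.adj (g p.1) (g p.2) ↔
      Xor' (Γ.adj p.1 p.2) (p.1 ∈ Γ.left ∧ p.2 ∈ Γ.right ∧ (p.1 = v ∨ p.2 = v)) := by
    intro p _
    by_cases h1 : p.1 ∈ Γ.left
    · by_cases h2 : p.2 ∈ Γ.right
      · have hkey := hg.2 p.1 h1 p.2 h2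
        have hnb : ¬ (p.1 ∈ ({v} : Set V) ∧ p.2 ∈ ({v} : Set V)) := by
          simp only [Set.mem_singleton_iff]
          rintro ⟨e1, e2⟩
          exact Γ.not_right_of_left (e1 ▸ h1) (e2 ▸ h2)
        simp only [ne_eq, pair_ncard_eq_one_iff hnb, Set.mem_singleton_iff] at hkey
        rw [Xor', xor_def]
        simp only [h1, h2, true_and]
        tauto
      · have hng : ¬ Γ.adj (g p.1) (g p.2) := by
          intro h
          have := Γ.adj_dom _ _ h
          rw [(hg.1).1, (hg.1).2] at this
          exact h2 this.2
        have hna : ¬ Γ.adj p.1 p.2 := fun h => h2 (Γ.adj_dom _ _ h).2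
        rw [Xor']
        simp [hng, hna, h2]
    · have hng : ¬ Γ.adj (g p.1) (g p.2) := by
        intro h
        have := Γ.adj_dom _ _ h
        rw [(hg.1).1, (hg.1).2] at this
        exact h1 this.1
      have hna : ¬ Γ.adj p.1 p.2 := fun h => h1 (Γ.adj_dom _ _ h).1
      rw [Xor']
      simp [hng, hna, h1]
  rw [Finset.filter_congr hpred]
  rw [even_filter_xor]
  have hflag : Even (((S ×ˢ S).filter fun p =>
      p.1 ∈ Γ.left ∧ p.2 ∈ Γ.right ∧ (p.1 = v ∨ p.2 = v)).card) := by
    cases i with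
    | l =>
      have hvl : v ∈ Γ.left := hv
      have : ((S ×ˢ S).filter fun p =>
          p.1 ∈ Γ.left ∧ p.2 ∈ Γ.right ∧ (p.1 = v ∨ p.2 = v)) =
          ((S ×ˢ S).filter fun p => p.1 = v ∧ p.2 ∈ Γ.right) := by
        refine Finset.filter_congr fun p _ => ?_
        constructor
        · rintro ⟨h1, h2, h3 | h3⟩
          · exact ⟨h3, h2⟩
          · exact absurd (h3 ▸ h2) (Γ.not_right_of_left hvl)
        · rintro ⟨h1, h2⟩
          exact ⟨h1 ▸ hvl, h2, Or.inl h1⟩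
      rw [this, Finset.filter_product (fun x => x = v) (fun y => y ∈ Γ.right),
        Finset.card_product]
      have hS' : Even ((S.filter (· ∈ Γ.right)).card) := hS
      exact hS'.mul_left _
    | r =>
      have hvr : v ∈ Γ.right := hv
      have : ((S ×ˢ S).filter fun p =>
          p.1 ∈ Γ.left ∧ p.2 ∈ Γ.right ∧ (p.1 = v ∨ p.2 = v)) =
          ((S ×ˢ S).filter fun p => p.1 ∈ Γ.left ∧ p.2 = v) := by
        refine Finset.filter_congr fun p _ => ?_
        constructor
        · rintro ⟨h1, h2, h3 | h3⟩
          · exact absurd (h3 ▸ h1) (Γ.not_left_of_right hvr)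
          · exact ⟨h1, h3⟩
        · rintro ⟨h1, h2⟩
          exact ⟨h1, h2 ▸ hvr, Or.inr h2⟩
      rw [this, Finset.filter_product (fun x => x ∈ Γ.left) (fun y => y = v),
        Finset.card_product]
      have hS' : Even ((S.filter (· ∈ Γ.left)).card) := hS
      exact hS'.mul_right _
  rw [eCnt]
  tauto

lemma switchGroup_le_parityGroup (i : BSide) :
    Γ.switchGroup {i} ≤ Γ.parityGroup i.other := by
  rw [switchGroup, closedClosure]
  apply sInf_le
  refine ⟨Γ.parityGroup_closed i.other, ?_⟩
  rintro g (hg | ⟨i', hi', v, hv, hsw⟩)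
  · exact Γ.aut_mem_parityGroup hg i.other
  · have : i' = i := hi'
    subst this
    exact Γ.switch_mem_parityGroup hv hsw

end BipartiteGraph


namespace BipartiteGraph

variable {V : Type*} (Γ : BipartiteGraph V)

open scoped Classical in
lemma eCnt_unique_left (S : Finset V) (a : V) (ha : a ∈ S) (hal : a ∈ Γ.left)
    (hu : ∀ x ∈ S, x ∈ Γ.left → x = a) :
    Γ.eCnt S = (S.filter fun b => Γ.adj a b).card := by
  rw [eCnt]
  have : (S ×ˢ S).filter (fun p => Γ.adj p.1 p.2) =
      {a} ×ˢ (S.filter fun b => Γ.adj a b) := by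
    ext ⟨x, y⟩
    simp only [Finset.mem_filter, Finset.mem_product, Finset.mem_singleton]
    constructor
    · rintro ⟨⟨hx, hy⟩, hadj⟩
      have hx' : x = a := hu x hx (Γ.adj_dom _ _ hadj).1
      subst hx'
      exact ⟨rfl, hy, hadj⟩
    · rintro ⟨rfl, hy, hadj⟩
      exact ⟨⟨ha, hy⟩, hadj⟩
  rw [this, Finset.card_product, Finset.card_singleton, one_mul]

open scoped Classical in
lemma eCnt_unique_right (S : Finset V) (b : V) (hb : b ∈ S) (hbr : b ∈ Γ.right)
    (hu : ∀ x ∈ S, x ∈ Γ.right → x = b) :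
    Γ.eCnt S = (S.filter fun x => Γ.adj x b).card := by
  rw [eCnt]
  have : (S ×ˢ S).filter (fun p => Γ.adj p.1 p.2) =
      (S.filter fun x => Γ.adj x b) ×ˢ {b} := by
    ext ⟨x, y⟩
    simp only [Finset.mem_filter, Finset.mem_product, Finset.mem_singleton]
    constructor
    · rintro ⟨⟨hx, hy⟩, hadj⟩
      have hy' : y = b := hu y hy (Γ.adj_dom _ _ hadj).2
      subst hy'
      exact ⟨⟨hx, hadj⟩, rfl⟩
    · rintro ⟨⟨hx, hadj⟩, rfl⟩
      exact ⟨⟨hx, hb⟩, hadj⟩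
  rw [this, Finset.card_product, Finset.card_singleton, mul_one]

set_option maxHeartbeats 1000000 in
lemma inAutStar_of_parity {g : Equiv.Perm V} (hgr : g ∈ Γ.parityGroup BSide.r)
    (hgl : g ∈ Γ.parityGroup BSide.l) : Γ.InAutStar g := by
  classical
  have hsym : g ∈ Γ.symLR := hgr.1
  have claim1 : ∀ a ∈ Γ.left, ∀ b ∈ Γ.right, ∀ b' ∈ Γ.right,
      ((Γ.adj a b ↔ Γ.adj a b') ↔ (Γ.adj (g a) (g b) ↔ Γ.adj (g a) (g b'))) := by
    intro a ha b hb b' hb'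
    by_cases hbb : b = b'
    · subst hbb; simp
    · set S : Finset V := insert a {b, b'} with hSdef
      have haS : a ∈ S := Finset.mem_insert_self _ _
      have hbS : b ∈ S := Finset.mem_insert_of_mem (Finset.mem_insert_self _ _)
      have hb'S : b' ∈ S := Finset.mem_insert_of_mem
        (Finset.mem_insert_of_mem (Finset.mem_singleton_self _))
      have hS : Even ((S.filter (· ∈ Γ.side BSide.r)).card) := by
        have : S.filter (· ∈ Γ.side BSide.r) = {b, b'} := by
          rw [hSdef, Finset.filter_insert, if_neg (show ¬ a ∈ Γ.side BSide.r from Γ.not_right_of_left ha)]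
          exact Finset.filter_true_of_mem (by
            intro x hx
            rcases Finset.mem_insert.mp hx with rfl | hx
            · exact hb
            · rw [Finset.mem_singleton.mp hx]; exact hb')
        rw [this, Finset.card_insert_of_notMem (by simp [hbb]), Finset.card_singleton]
        exact ⟨1, rfl⟩
      have hpar := hgr.2 S hS
      have hcur : Γ.eCnt S = (({b, b'} : Finset V).filter fun y => Γ.adj a y).card := by
        rw [Γ.eCnt_unique_left S a haS ha (by
          intro x hx hxl
          rcases Finset.mem_insert.mp hx with rfl | hx
          · rfl
          · rcases Finset.mem_insert.mp hx with rfl | hx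
            · exact absurd hxl (Γ.not_left_of_right hb)
            · rw [Finset.mem_singleton.mp hx] at hxl
              exact absurd hxl (Γ.not_left_of_right hb'))]
        rw [hSdef, Finset.filter_insert, if_neg (Γ.adj_irrefl a)]
      have himg : S.image g = insert (g a) {g b, g b'} := by
        rw [hSdef, Finset.image_insert, Finset.image_insert, Finset.image_singleton]
      have hcur' : Γ.eCnt (S.image g) =
          (({g b, g b'} : Finset V).filter fun y => Γ.adj (g a) y).card := by
        rw [himg, Γ.eCnt_unique_left _ (g a) (Finset.mem_insert_self _ _)
          ((hsym.1 a).mpr ha) (by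
          intro x hx hxl
          rcases Finset.mem_insert.mp hx with rfl | hx
          · rfl
          · rcases Finset.mem_insert.mp hx with rfl | hx
            · exact absurd hxl (Γ.not_left_of_right ((hsym.2 b).mpr hb))
            · rw [Finset.mem_singleton.mp hx] at hxl
              exact absurd hxl (Γ.not_left_of_right ((hsym.2 b').mpr hb')))]
        rw [Finset.filter_insert, if_neg (Γ.adj_irrefl (g a))]
      rw [hcur, hcur'] at hpar
      rw [even_filter_pair hbb] at hpar
      rw [even_filter_pair (g.injective.ne hbb)] at hpar
      exact hpar
  have claim2 : ∀ b ∈ Γ.right, ∀ a ∈ Γ.left, ∀ a' ∈ Γ.left,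
      ((Γ.adj a b ↔ Γ.adj a' b) ↔ (Γ.adj (g a) (g b) ↔ Γ.adj (g a') (g b))) := by
    intro b hb a ha a' ha'
    by_cases haa : a = a'
    · subst haa; simp
    · set S : Finset V := insert b {a, a'} with hSdef
      have hbS : b ∈ S := Finset.mem_insert_self _ _
      have haS : a ∈ S := Finset.mem_insert_of_mem (Finset.mem_insert_self _ _)
      have ha'S : a' ∈ S := Finset.mem_insert_of_mem
        (Finset.mem_insert_of_mem (Finset.mem_singleton_self _))
      have hS : Even ((S.filter (· ∈ Γ.side BSide.l)).card) := by
        have : S.filter (· ∈ Γ.side BSide.l) = {a, a'} := by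
          rw [hSdef, Finset.filter_insert, if_neg (show ¬ b ∈ Γ.side BSide.l from Γ.not_left_of_right hb)]
          exact Finset.filter_true_of_mem (by
            intro x hx
            rcases Finset.mem_insert.mp hx with rfl | hx
            · exact ha
            · rw [Finset.mem_singleton.mp hx]; exact ha')
        rw [this, Finset.card_insert_of_notMem (by simp [haa]), Finset.card_singleton]
        exact ⟨1, rfl⟩
      have hpar := hgl.2 S hS
      have hcur : Γ.eCnt S = (({a, a'} : Finset V).filter fun x => Γ.adj x b).card := by
        rw [Γ.eCnt_unique_right S b hbS hb (by
          intro x hx hxr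
          rcases Finset.mem_insert.mp hx with rfl | hx
          · rfl
          · rcases Finset.mem_insert.mp hx with rfl | hx
            · exact absurd hxr (Γ.not_right_of_left ha)
            · rw [Finset.mem_singleton.mp hx] at hxr
              exact absurd hxr (Γ.not_right_of_left ha'))]
        rw [hSdef, Finset.filter_insert, if_neg (Γ.adj_irrefl b)]
      have himg : S.image g = insert (g b) {g a, g a'} := by
        rw [hSdef, Finset.image_insert, Finset.image_insert, Finset.image_singleton]
      have hcur' : Γ.eCnt (S.image g) =
          (({g a, g a'} : Finset V).filter fun x => Γ.adj x (g b)).card := by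
        rw [himg, Γ.eCnt_unique_right _ (g b) (Finset.mem_insert_self _ _)
          ((hsym.2 b).mpr hb) (by
          intro x hx hxr
          rcases Finset.mem_insert.mp hx with rfl | hx
          · rfl
          · rcases Finset.mem_insert.mp hx with rfl | hx
            · exact absurd hxr (Γ.not_right_of_left ((hsym.1 a).mpr ha))
            · rw [Finset.mem_singleton.mp hx] at hxr
              exact absurd hxr (Γ.not_right_of_left ((hsym.1 a').mpr ha')))]
        rw [Finset.filter_insert, if_neg (Γ.adj_irrefl (g b))]
      rw [hcur, hcur'] at hpar
      rw [even_filter_pair haa] at hpar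
      rw [even_filter_pair (g.injective.ne haa)] at hpar
      exact hpar
  obtain ⟨a₀, ha₀⟩ := Γ.left_nonempty
  obtain ⟨b₀, hb₀⟩ := Γ.right_nonempty
  refine ⟨hsym, ?_⟩
  by_cases h₀ : Γ.adj a₀ b₀ ↔ Γ.adj (g a₀) (g b₀)
  · left
    intro a ha b hb
    have c1 := claim1 a ha b hb b₀ hb₀
    have c2 := claim2 b₀ hb₀ a ha a₀ ha₀
    tauto
  · right
    intro a ha b hb
    have c1 := claim1 a ha b hb b₀ hb₀
    have c2 := claim2 b₀ hb₀ a ha a₀ ha₀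
    tauto

lemma aut_mem_switchGroup {g : Equiv.Perm V} (hg : g ∈ Γ.autGroup) (i : BSide) :
    g ∈ Γ.switchGroup {i} := by
  rw [switchGroup, closedClosure, Subgroup.mem_sInf]
  rintro G ⟨-, hG⟩
  exact hG (Or.inl hg)

end BipartiteGraph

/-- `Aut(Γ)* = S_{l}(Γ) ∩ S_{r}(Γ)`; moreover any switch `ρ` with respect to
the whole side `R_l` belongs to both `S_{l}(Γ)` and `S_{r}(Γ)`. -/
theorem autStar_eq_inter_switchGroups {V : Type*} (Γ : BipartiteGraph V)
    (hΓ : Γ.IsRandom) :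
    ({g : Equiv.Perm V | Γ.InAutStar g} =
        (Γ.switchGroup {BSide.l} : Set (Equiv.Perm V)) ∩
          (Γ.switchGroup {BSide.r} : Set (Equiv.Perm V))) ∧
      ∀ ρ : Equiv.Perm V, Γ.IsSwitch ρ Γ.left →
        ρ ∈ Γ.switchGroup {BSide.l} ∧ ρ ∈ Γ.switchGroup {BSide.r} := by
  have hmore : ∀ ρ : Equiv.Perm V, Γ.IsSwitch ρ Γ.left →
      ρ ∈ Γ.switchGroup {BSide.l} ∧ ρ ∈ Γ.switchGroup {BSide.r} := fun ρ hρ =>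
    ⟨Γ.rho_mem hΓ BSide.l ρ hρ, Γ.rho_mem hΓ BSide.r ρ hρ⟩
  refine ⟨?_, hmore⟩
  ext g
  simp only [Set.mem_setOf_eq, Set.mem_inter_iff, SetLike.mem_coe]
  constructor
  · rintro ⟨hsym, hiso | hanti⟩
    · have hg : g ∈ Γ.autGroup := by
        refine ⟨hsym, fun a b => ?_⟩
        by_cases hab : a ∈ Γ.left ∧ b ∈ Γ.right
        · exact hiso a hab.1 b hab.2
        · constructor
          · intro h; exact absurd (Γ.adj_dom a b h) hab
          · intro h
            have := Γ.adj_dom _ _ h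
            rw [hsym.1 a, hsym.2 b] at this
            exact absurd this hab
      exact ⟨Γ.aut_mem_switchGroup hg BSide.l, Γ.aut_mem_switchGroup hg BSide.r⟩
    · have hg : Γ.IsSwitch g Γ.left := by
        refine ⟨hsym, fun a ha b hb => ?_⟩
        have hC : ¬ (a ∈ Γ.left ∧ b ∈ Γ.left) := fun h => Γ.not_left_of_right hb h.2
        simp only [ne_eq, BipartiteGraph.pair_ncard_eq_one_iff hC]
        have := hanti a ha b hb
        simp only [ha, true_or, not_true_eq_false, iff_false]
        tauto
      exact hmore g hg
  · rintro ⟨hl', hr'⟩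
    have h1 : g ∈ Γ.parityGroup BSide.r := Γ.switchGroup_le_parityGroup BSide.l hl'
    have h2 : g ∈ Γ.parityGroup BSide.l := Γ.switchGroup_le_parityGroup BSide.r hr'
    exact Γ.inAutStar_of_parity h1 h2
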